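/- If 1 → H → G → E → 1 is a short exact sequence of groups and both H and E satisfy the Bergman property, then G satisfies the Bergman property. -/

import Mathlib

/-- A group has the Bergman property if for every generating set `U` there is `n`
such that every element is a product of at most `n` elements of `U ∪ U⁻¹`. -/
def BergmanProperty (G : Type*) [Group G] : Prop :=
  ∀ U : Set G, Subgroup.closure U = ⊤ →
    ∃ n : ℕ, ∀ g : G, ∃ l : List G,
      l.length ≤ n ∧ (∀ x ∈ l, x ∈ U ∪ U⁻¹) ∧ l.prod = g

theorem stmt10 {H G E : Type*} [Group H] [Group G] [Group E]
    (φ : H →* G) (ψ : G →* E) (hφ : Function.Injective φ)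
    (hψ : Function.Surjective ψ) (hexact : φ.range = ψ.ker)
    (hH : BergmanProperty H) (hE : BergmanProperty E) :
    BergmanProperty G := by
  intro U hU
  set W : Set G := U ∪ U⁻¹ with hWdef
  have hWinv : ∀ x ∈ W, x⁻¹ ∈ W := by
    rintro x (h | h)
    · exact Or.inr (by simpa using h)
    · exact Or.inl (by simpa using h)
  -- inverse of a W-word is a W-word
  have hinvword : ∀ l : List G, (∀ x ∈ l, x ∈ W) →
      ∃ l' : List G, l'.length = l.length ∧ (∀ x ∈ l', x ∈ W) ∧ l'.prod = l.prod⁻¹ := by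
    intro l hl
    refine ⟨(l.map fun x => x⁻¹).reverse, by simp, ?_, (List.prod_inv_reverse l).symm⟩
    intro x hx
    simp only [List.mem_reverse, List.mem_map] at hx
    obtain ⟨y, hy, rfl⟩ := hx
    exact hWinv y (hl y hy)
  -- ψ '' U generates E
  have hUE : Subgroup.closure (ψ '' U) = ⊤ := by
    rw [← MonoidHom.map_closure, hU]
    exact Subgroup.map_top_of_surjective ψ hψ
  obtain ⟨n, hn⟩ := hE (ψ '' U) hUE
  -- lift lists from E to G
  have hlift : ∀ l : List E, (∀ x ∈ l, ∃ w ∈ W, ψ w = x) →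
      ∃ L : List G, L.length = l.length ∧ (∀ x ∈ L, x ∈ W) ∧ L.map ψ = l := by
    intro l
    induction l with
    | nil => exact fun _ => ⟨[], by simp, by simp, by simp⟩
    | cons a t ih =>
      intro h
      obtain ⟨w, hw, hwa⟩ := h a List.mem_cons_self
      obtain ⟨L, h1, h2, h3⟩ := ih fun x hx => h x (List.mem_cons_of_mem _ hx)
      refine ⟨w :: L, by simp [h1], ?_, by simp [hwa, h3]⟩
      intro x hx
      rcases List.mem_cons.1 hx with rfl | hx
      · exact hw
      · exact h2 x hx
  -- representative function
  have hrep : ∀ e : E, ∃ l : List G, l.length ≤ n ∧ (∀ x ∈ l, x ∈ W) ∧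
      ψ l.prod = e ∧ (e = 1 → l = []) := by
    intro e
    by_cases he : e = 1
    · exact ⟨[], by simp, by simp, by simp [he], fun _ => rfl⟩
    · obtain ⟨l, hl1, hl2, hl3⟩ := hn e
      have : ∀ x ∈ l, ∃ w ∈ W, ψ w = x := by
        intro x hx
        rcases hl2 x hx with hx' | hx'
        · obtain ⟨u, hu, rfl⟩ := hx'
          exact ⟨u, Or.inl hu, rfl⟩
        · have : x⁻¹ ∈ ψ '' U := hx'
          obtain ⟨u, hu, hux⟩ := this
          exact ⟨u⁻¹, Or.inr (by simpa using hu), by rw [map_inv, hux, inv_inv]⟩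
      obtain ⟨L, h1, h2, h3⟩ := hlift l this
      refine ⟨L, h1 ▸ hl1, h2, ?_, fun h => absurd h he⟩
      rw [← List.prod_hom L ψ, h3]
      exact hl3
  choose r hr1 hr2 hr3 hr4 using hrep
  -- the set V
  set V : Set G := {g | ψ g = 1 ∧ ∃ l : List G, l.length ≤ 2 * n + 1 ∧
      (∀ x ∈ l, x ∈ W) ∧ l.prod = g} with hVdef
  -- key telescoping lemma
  have key : ∀ l : List G, (∀ x ∈ l, x ∈ W) →
      l.prod * ((r (ψ l.prod)).prod)⁻¹ ∈ Subgroup.closure V := by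
    intro l
    induction l using List.reverseRecOn with
    | nil =>
      intro _
      rw [List.prod_nil, map_one, hr4 1 rfl]
      simpa using Subgroup.one_mem _
    | append_singleton t a ih =>
      intro h
      have ht : ∀ x ∈ t, x ∈ W := fun x hx => h x (List.mem_append_left _ hx)
      have ha : a ∈ W := h a (List.mem_append_right _ (List.mem_singleton_self a))
      have hIH := ih ht
      set q1 := r (ψ t.prod) with hq1
      set q2 := r (ψ (t ++ [a]).prod) with hq2
      -- the conjugating element
      obtain ⟨q2', hq2'1, hq2'2, hq2'3⟩ := hinvword q2 (hr2 _)
      have hc : q1.prod * a * q2.prod⁻¹ ∈ V := by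
        refine ⟨?_, q1 ++ [a] ++ q2', ?_, ?_, ?_⟩
        · have e1 : ψ q1.prod = ψ t.prod := hr3 _
          have e2 : ψ q2.prod = ψ (t ++ [a]).prod := hr3 _
          simp only [map_mul, map_inv, e1, e2, List.prod_append, List.prod_singleton]
          group
        · have l1 : q1.length ≤ n := hr1 _
          have l2 : q2.length ≤ n := hr1 _
          simp only [List.length_append, List.length_singleton, hq2'1]
          omega
        · intro x hx
          rcases List.mem_append.1 hx with hx | hx
          · rcases List.mem_append.1 hx with hx | hx
            · exact hr2 _ x hx
            · rw [List.mem_singleton] at hx; exact hx ▸ ha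
          · exact hq2'2 x hx
        · simp [List.prod_append, hq2'3, mul_assoc]
      have step : (t ++ [a]).prod * q2.prod⁻¹
          = (t.prod * q1.prod⁻¹) * (q1.prod * a * q2.prod⁻¹) := by
        simp [List.prod_append]; group
      rw [step]
      exact Subgroup.mul_mem _ hIH (Subgroup.subset_closure hc)
  -- every element of ker ψ is in closure V
  have hker : ∀ k : G, ψ k = 1 → k ∈ Subgroup.closure V := by
    intro k hk
    have hkW : k ∈ Submonoid.closure W := by
      have : k ∈ (Subgroup.closure U).toSubmonoid := by rw [hU]; trivial
      rwa [Subgroup.closure_toSubmonoid] at this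
    obtain ⟨l, hl1, hl2⟩ := Submonoid.exists_list_of_mem_closure hkW
    have := key l hl1
    rw [hl2, hk, hr4 1 rfl] at this
    simpa using this
  -- V ⊆ range φ
  have hVrange : V ⊆ Set.range φ := by
    rintro v ⟨hv, -⟩
    have : v ∈ ψ.ker := hv
    rw [← hexact] at this
    exact this
  -- φ⁻¹' V generates H
  have hVH : Subgroup.closure (φ ⁻¹' V) = ⊤ := by
    rw [eq_top_iff]
    intro h _
    have h1 : φ h ∈ Subgroup.closure V := by
      apply hker
      have : φ h ∈ ψ.ker := by rw [← hexact]; exact ⟨h, rfl⟩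
      exact this
    have h2 : Subgroup.map φ (Subgroup.closure (φ ⁻¹' V)) = Subgroup.closure V := by
      rw [MonoidHom.map_closure, Set.image_preimage_eq_of_subset hVrange]
    rw [← h2] at h1
    obtain ⟨h', hh', hhh⟩ := h1
    exact hφ hhh ▸ hh'
  obtain ⟨m, hm⟩ := hH (φ ⁻¹' V) hVH
  -- every element of V ∪ V⁻¹ has a short W-word
  have hVword : ∀ x ∈ V ∪ V⁻¹, ∃ l : List G, l.length ≤ 2 * n + 1 ∧
      (∀ y ∈ l, y ∈ W) ∧ l.prod = x := by
    rintro x (hx | hx)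
    · obtain ⟨-, l, h1, h2, h3⟩ := hx
      exact ⟨l, h1, h2, h3⟩
    · obtain ⟨-, l, h1, h2, h3⟩ := (Set.mem_inv.1 hx : x⁻¹ ∈ V)
      obtain ⟨l', h1', h2', h3'⟩ := hinvword l h2
      exact ⟨l', h1' ▸ h1, h2', by rw [h3', h3, inv_inv]⟩
  -- flattening lemma
  have flatten : ∀ L : List G, (∀ x ∈ L, ∃ l : List G, l.length ≤ 2 * n + 1 ∧
      (∀ y ∈ l, y ∈ W) ∧ l.prod = x) →
      ∃ l : List G, l.length ≤ (2 * n + 1) * L.length ∧ (∀ y ∈ l, y ∈ W) ∧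
        l.prod = L.prod := by
    intro L
    induction L with
    | nil => exact fun _ => ⟨[], by simp, by simp, by simp⟩
    | cons a t ih =>
      intro hh
      obtain ⟨la, ha1, ha2, ha3⟩ := hh a List.mem_cons_self
      obtain ⟨lt, ht1, ht2, ht3⟩ := ih fun x hx => hh x (List.mem_cons_of_mem _ hx)
      refine ⟨la ++ lt, ?_, ?_, by simp [ha3, ht3]⟩
      · simp only [List.length_append, List.length_cons]
        calc la.length + lt.length ≤ (2 * n + 1) + (2 * n + 1) * t.length := by omega
          _ = (2 * n + 1) * (t.length + 1) := by ring
      · intro y hy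
        rcases List.mem_append.1 hy with hy | hy
        · exact ha2 y hy
        · exact ht2 y hy
  -- conclusion
  refine ⟨(2 * n + 1) * m + n, fun g => ?_⟩
  set q := r (ψ g) with hq
  have hkg : ψ (g * q.prod⁻¹) = 1 := by
    have : ψ q.prod = ψ g := hr3 _
    simp [this]
  have : g * q.prod⁻¹ ∈ ψ.ker := hkg
  rw [← hexact] at this
  obtain ⟨h, hh⟩ := this
  obtain ⟨lh, hlh1, hlh2, hlh3⟩ := hm h
  have hmap : ∀ x ∈ lh.map φ, ∃ l : List G, l.length ≤ 2 * n + 1 ∧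
      (∀ y ∈ l, y ∈ W) ∧ l.prod = x := by
    intro x hx
    simp only [List.mem_map] at hx
    obtain ⟨y, hy, rfl⟩ := hx
    apply hVword
    rcases hlh2 y hy with hy' | hy'
    · exact Or.inl hy'
    · have : φ y⁻¹ ∈ V := (Set.mem_inv.1 hy' : y⁻¹ ∈ φ ⁻¹' V)
      right
      rw [Set.mem_inv, ← map_inv]
      exact this
  obtain ⟨lk, hlk1, hlk2, hlk3⟩ := flatten (lh.map φ) hmap
  refine ⟨lk ++ q, ?_, ?_, ?_⟩
  · have : lk.length ≤ (2 * n + 1) * m := by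
      calc lk.length ≤ (2 * n + 1) * (lh.map φ).length := hlk1
        _ ≤ (2 * n + 1) * m := by
            apply Nat.mul_le_mul_left
            simpa using hlh1
    have hq' : q.length ≤ n := hr1 _
    simp only [List.length_append]
    omega
  · intro x hx
    rcases List.mem_append.1 hx with hx | hx
    · exact hlk2 x hx
    · exact hr2 _ x hx
  · rw [List.prod_append, hlk3]
    rw [List.prod_hom lh φ, hlh3, hh]
    group
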